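/- Let R = ℂ[x,x⁻¹,y,y⁻¹], let B ⊆ R be the ℂ-subspace spanned by the monomials xⁱyʲ with i ≥ 0 and j ∈ ℤ, and let n be an odd natural number. Set M = x^{−(n−1)/2}B/B and M^⊥ = x^{−(n+1)/2}B/B inside V = x⁻ⁿB/B. Then the ℂ-linear map ℂ[y,y⁻¹] → M^⊥/M sending h to the class of x^{−(n+1)/2}·h is bijective, and for all h, h′ ∈ ℂ[y,y⁻¹] the pairing value β(x^{−(n+1)/2}h, x^{−(n+1)/2}h′) equals the class of x⁻¹y⁻¹hh′ in R/B, where β is induced by (f,g) ↦ xⁿy⁻¹fg. (Hence the sublagrangian reduction M^⊥/M carries the rank-one form ⟨1/w⟩ = ⟨w⟩ over ℂ[w,w⁻¹], giving the entry ⟨w⟩ in the odd-n matrix of d⁰.) -/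

import Mathlib

noncomputable section

/-- The Laurent polynomial ring `ℂ[x,x⁻¹,y,y⁻¹]` as the monoid algebra of `ℤ × ℤ` over `ℂ`. -/
abbrev LaurentR : Type := AddMonoidAlgebra ℂ (ℤ × ℤ)

/-- The monomial `xⁱyʲ`. -/
def mono (i j : ℤ) : LaurentR := AddMonoidAlgebra.single (i, j) 1

/-- `x` -/
def xx : LaurentR := mono 1 0
/-- `x⁻¹` -/
def xxInv : LaurentR := mono (-1) 0
/-- `y` -/
def yy : LaurentR := mono 0 1
/-- `y⁻¹` -/
def yyInv : LaurentR := mono 0 (-1)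

/-- `A = ℂ[x,y]`, the ℂ-subspace spanned by monomials `xⁱyʲ` with `i ≥ 0`, `j ≥ 0`. -/
def Asub : Submodule ℂ LaurentR := Submodule.span ℂ {r | ∃ (i : ℕ) (j : ℕ), r = mono i j}
/-- `B = ℂ[x,y,y⁻¹]`, the ℂ-subspace spanned by monomials `xⁱyʲ` with `i ≥ 0`, `j ∈ ℤ`. -/
def Bsub : Submodule ℂ LaurentR := Submodule.span ℂ {r | ∃ (i : ℕ) (j : ℤ), r = mono i j}
/-- `C = ℂ[x,x⁻¹,y]`, the ℂ-subspace spanned by monomials `xⁱyʲ` with `i ∈ ℤ`, `j ≥ 0`. -/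
def Csub : Submodule ℂ LaurentR := Submodule.span ℂ {r | ∃ (i : ℤ) (j : ℕ), r = mono i j}
/-- `ℂ[y,y⁻¹]`, the ℂ-subspace spanned by the monomials `yʲ`, `j ∈ ℤ`. -/
def Dy : Submodule ℂ LaurentR := Submodule.span ℂ {r | ∃ (j : ℤ), r = mono 0 j}
/-- `ℂ[x,x⁻¹]`, the ℂ-subspace spanned by the monomials `xⁱ`, `i ∈ ℤ`. -/
def Dx : Submodule ℂ LaurentR := Submodule.span ℂ {r | ∃ (i : ℤ), r = mono i 0}

/-- `u·L = {u·f : f ∈ L}` as a `ℂ`-submodule of `LaurentR`. -/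
def dil (u : LaurentR) (L : Submodule ℂ LaurentR) : Submodule ℂ LaurentR :=
  L.map (LinearMap.mulLeft ℂ u)

lemma mono_mul (i j i' j' : ℤ) : mono i j * mono i' j' = mono (i+i') (j+j') := by
  simp [mono, AddMonoidAlgebra.single_mul_single, Prod.mk_add_mk]

lemma mono_pow (k : ℕ) (i j : ℤ) : mono i j ^ k = mono (k*i) (k*j) := by
  simp [mono, AddMonoidAlgebra.single_pow, Prod.smul_mk, nsmul_eq_mul]

lemma mono_zero_one : mono 0 0 = 1 := rfl

lemma mono_mul_apply (i j : ℤ) (f : LaurentR) (p : ℤ × ℤ) :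
    (mono i j * f).coeff p = f.coeff (-(i,j) + p) := by
  simp [mono, AddMonoidAlgebra.coeff_single_mul_apply]

lemma mono_mul_injective (i j : ℤ) : Function.Injective (fun f : LaurentR => mono i j * f) := by
  intro f g h
  have := congrArg (fun t => mono (-i) (-j) * t) h
  simpa [← mul_assoc, mono_mul, mono_zero_one] using this

lemma Bsub_eq : Bsub = AddMonoidAlgebra.supported ℂ ℂ {p : ℤ × ℤ | 0 ≤ p.1} := by
  rw [Bsub, AddMonoidAlgebra.supported_eq_span_single]
  congr 1
  ext r
  constructor
  · rintro ⟨i, j, rfl⟩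
    exact ⟨((i:ℤ), j), by simp, rfl⟩
  · rintro ⟨⟨i, j⟩, hi, rfl⟩
    exact ⟨i.toNat, j, by simp [mono, Int.toNat_of_nonneg hi]⟩

lemma Dy_eq : Dy = AddMonoidAlgebra.supported ℂ ℂ {p : ℤ × ℤ | p.1 = 0} := by
  rw [Dy, AddMonoidAlgebra.supported_eq_span_single]
  congr 1
  ext r
  constructor
  · rintro ⟨j, rfl⟩
    exact ⟨(0, j), rfl, rfl⟩
  · rintro ⟨⟨i, j⟩, hi, rfl⟩
    exact ⟨j, by simp at hi; simp [mono, hi]⟩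

lemma xxInv_pow (k : ℕ) : xxInv ^ k = mono (-(k:ℤ)) 0 := by
  rw [xxInv, mono_pow]; norm_num

lemma mem_dil (i j : ℤ) (L : Submodule ℂ LaurentR) (f : LaurentR) :
    f ∈ dil (mono i j) L ↔ mono (-i) (-j) * f ∈ L := by
  constructor
  · rintro ⟨g, hg, rfl⟩
    simpa [LinearMap.mulLeft_apply, ← mul_assoc, mono_mul, mono_zero_one] using hg
  · intro h
    refine ⟨mono (-i) (-j) * f, h, ?_⟩
    simp [LinearMap.mulLeft_apply, ← mul_assoc, mono_mul, mono_zero_one]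

lemma mem_dil_xxInv (k : ℕ) (L : Submodule ℂ LaurentR) (f : LaurentR) :
    f ∈ dil (xxInv ^ k) L ↔ mono (k:ℤ) 0 * f ∈ L := by
  rw [xxInv_pow, mem_dil]; norm_num

lemma dil_xxInv_pow (k : ℕ) :
    dil (xxInv ^ k) Bsub = AddMonoidAlgebra.supported ℂ ℂ {p : ℤ × ℤ | -(k:ℤ) ≤ p.1} := by
  ext f
  rw [mem_dil_xxInv, Bsub_eq, AddMonoidAlgebra.mem_supported', AddMonoidAlgebra.mem_supported']
  simp only [mono_mul_apply, Set.mem_setOf_eq, not_le]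
  constructor
  · intro h q hq
    have := h (((k:ℤ), 0) + q) (by simp [Prod.fst_add]; omega)
    rwa [neg_add_cancel_left] at this
  · intro h p hp
    apply h
    simp only [Prod.fst_add, Prod.fst_neg]
    omega

lemma Dy_le_Bsub : Dy ≤ Bsub := by
  rw [Dy_eq, Bsub_eq]
  exact AddMonoidAlgebra.supported_mono (by intro p hp; simp at hp ⊢; omega)

/-- For `n` odd, with `M = x^{-(n-1)/2}B` and `M^⊥ = x^{-(n+1)/2}B` inside
`V = x⁻ⁿB` (all containing `B`), the ℂ-linear map `ℂ[y,y⁻¹] → M^⊥/M`, `h ↦ [x^{-(n+1)/2}·h]`,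
is bijective (injective with range the image of `M^⊥` in `R/M`), and for all `h, h' ∈ ℂ[y,y⁻¹]`
the pairing value `β(x^{-(n+1)/2}h, x^{-(n+1)/2}h')` equals the class of `x⁻¹y⁻¹hh'` in `R/B`,
where `β` is induced by `(f,g) ↦ xⁿy⁻¹fg`. -/
theorem stmt_5 (n : ℕ) (hn : Odd n) :
    Function.Injective (fun h : Dy =>
      (dil (xxInv ^ ((n - 1) / 2)) Bsub).mkQ (xxInv ^ ((n + 1) / 2) * (h : LaurentR))) ∧
    Set.range (fun h : Dy =>
      (dil (xxInv ^ ((n - 1) / 2)) Bsub).mkQ (xxInv ^ ((n + 1) / 2) * (h : LaurentR)))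
      = ((dil (xxInv ^ ((n + 1) / 2)) Bsub).map (dil (xxInv ^ ((n - 1) / 2)) Bsub).mkQ :
          Set (LaurentR ⧸ dil (xxInv ^ ((n - 1) / 2)) Bsub)) ∧
    ∀ h ∈ Dy, ∀ h' ∈ Dy,
      Bsub.mkQ (xx ^ n * yyInv * (xxInv ^ ((n + 1) / 2) * h) * (xxInv ^ ((n + 1) / 2) * h'))
        = Bsub.mkQ (xxInv * yyInv * (h * h')) := by
  obtain ⟨m, rfl⟩ := hn
  have ha : (2 * m + 1 + 1) / 2 = m + 1 := by omega
  have hb : (2 * m + 1 - 1) / 2 = m := by omega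
  rw [ha, hb]
  set a : ℕ := m + 1 with haa
  refine ⟨?_, ?_, ?_⟩
  · -- injectivity
    intro h h' heq
    simp only [Submodule.mkQ_apply, Submodule.Quotient.eq] at heq
    rw [← mul_sub, dil_xxInv_pow, AddMonoidAlgebra.mem_supported'] at heq
    have hd := Dy_eq.le (sub_mem h.2 h'.2)
    rw [AddMonoidAlgebra.mem_supported'] at hd
    have hzero : xxInv ^ a * ((h : LaurentR) - h') = 0 := by
      ext p
      rw [AddMonoidAlgebra.coeff_zero, Finsupp.coe_zero, Pi.zero_apply]
      by_cases hp : -(m:ℤ) ≤ p.1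
      · rw [xxInv_pow, mono_mul_apply]
        apply hd
        simp only [Set.mem_setOf_eq, Prod.fst_add, Prod.fst_neg]
        push_cast [haa]
        omega
      · exact heq p (by simpa using hp)
    have hsub : (h : LaurentR) - h' = 0 := by
      apply mono_mul_injective (-(a:ℤ)) 0
      rw [← xxInv_pow] at *
      simpa using hzero
    exact Subtype.ext (sub_eq_zero.mp hsub)
  · -- range
    ext q
    simp only [Set.mem_range, SetLike.mem_coe, Submodule.mem_map]
    constructor
    · rintro ⟨h, rfl⟩
      exact ⟨xxInv ^ a * h, ⟨h, Dy_le_Bsub h.2, rfl⟩, rfl⟩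
    · rintro ⟨f, hf, rfl⟩
      rw [mem_dil_xxInv] at hf
      set g : LaurentR := mono (a:ℤ) 0 * f with hg
      have hfg : f = mono (-(a:ℤ)) 0 * g := by
        rw [hg, ← mul_assoc, mono_mul]
        simp [mono_zero_one]
      rw [Bsub_eq, AddMonoidAlgebra.mem_supported'] at hf
      set h0 : LaurentR := AddMonoidAlgebra.ofCoeff (Finsupp.filter (fun p : ℤ × ℤ => p.1 = 0) g.coeff) with hh0
      have hh0Dy : h0 ∈ Dy := by
        rw [Dy_eq, AddMonoidAlgebra.mem_supported']
        intro p hp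
        simp only [Set.mem_setOf_eq] at hp
        simp [hh0, AddMonoidAlgebra.coeff_ofCoeff, Finsupp.filter_apply, hp]
      refine ⟨⟨h0, hh0Dy⟩, ?_⟩
      simp only [Submodule.mkQ_apply, Submodule.Quotient.eq]
      rw [dil_xxInv_pow, AddMonoidAlgebra.mem_supported']
      intro p hp
      simp only [Set.mem_setOf_eq, not_le] at hp
      rw [hfg, xxInv_pow, ← mul_sub, mono_mul_apply, AddMonoidAlgebra.coeff_sub, Finsupp.sub_apply]
      by_cases hc : (a:ℤ) + p.1 = 0
      · simp [hh0, AddMonoidAlgebra.coeff_ofCoeff, Finsupp.filter_apply, hc]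
      · have hgq : g.coeff (((a:ℤ), (0:ℤ)) + p) = 0 := by
          apply hf
          simp only [Set.mem_setOf_eq, not_le, Prod.fst_add]
          push_cast [haa] at hc hp ⊢
          omega
        simp [hh0, AddMonoidAlgebra.coeff_ofCoeff, Finsupp.filter_apply, hc, hgq]
  · -- pairing
    intro h hh h' hh'
    congr 1
    have key : xx ^ (2 * m + 1) * xxInv ^ a * xxInv ^ a = xxInv := by
      rw [xx, xxInv, mono_pow, mono_pow, mono_mul, mono_mul]
      congr 1 <;> (push_cast [haa]; ring)
    calc xx ^ (2*m+1) * yyInv * (xxInv ^ a * h) * (xxInv ^ a * h')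
        = (xx ^ (2*m+1) * xxInv ^ a * xxInv ^ a) * (yyInv * (h * h')) := by ring
      _ = xxInv * (yyInv * (h * h')) := by rw [key]
      _ = xxInv * yyInv * (h * h') := by ring
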